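/- Let μ be one-dimensional normalized Lebesgue measure on the circle C = {(z,0) : |z| = 1} ⊂ ∂𝔹₂ (the pushforward of normalized Haar measure on ∂𝔻 under z ↦ (z,0)). Then sup_{0≤r<1} ∫∫ |1/(1 − r²⟨z,w⟩)| dμ(w) dμ(z) = ∞; that is, μ has infinite energy with respect to the modulus of the Drury–Arveson kernel. -/

import Mathlib

open MeasureTheory Complex
open scoped ENNReal

local notation "⟪" x ", " y "⟫" => @inner ℂ _ _ x y

noncomputable instance : MeasurableSpace Circle := borel Circle
instance : BorelSpace Circle := ⟨rfl⟩
noncomputable instance (d : ℕ) : MeasurableSpace (EuclideanSpace ℂ (Fin d)) := borel _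
instance (d : ℕ) : BorelSpace (EuclideanSpace ℂ (Fin d)) := ⟨rfl⟩

/-- The embedding `z ↦ (z,0)` of the unit circle into `ℂ²`. -/
noncomputable def iota2 : Circle → EuclideanSpace ℂ (Fin 2) :=
  fun z => (EuclideanSpace.equiv (Fin 2) ℂ).symm ![(z : ℂ), 0]

section Aux

open Set Real ComplexConjugate

lemma aux_inv_lintegral : ∫⁻ θ in Set.Ioc (0:ℝ) 1, ENNReal.ofReal θ⁻¹ = ⊤ := by
  by_contra h
  have hint : Integrable (fun θ : ℝ => θ⁻¹) (volume.restrict (Ioc (0:ℝ) 1)) := by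
    refine (lintegral_ofReal_ne_top_iff_integrable
      measurable_inv.aestronglyMeasurable ?_).mp h
    filter_upwards [ae_restrict_mem measurableSet_Ioc] with x hx
    exact inv_nonneg.2 hx.1.le
  have : IntervalIntegrable (fun x : ℝ => x⁻¹) volume 0 1 :=
    (intervalIntegrable_iff_integrableOn_Ioc_of_le zero_le_one).mpr hint
  rw [intervalIntegrable_inv_iff] at this
  rcases this with h1 | h1
  · norm_num at h1
  · exact h1 (by norm_num : (0:ℝ) ∈ uIcc (0:ℝ) 1)

local notation "TT" => (2 * π : ℝ)

instance factT : Fact (0 < (2 * π : ℝ)) := ⟨Real.two_pi_pos⟩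

noncomputable def mu0 : Measure Circle :=
  (AddCircle.haarAddCircle (T := TT)).map AddCircle.toCircle

lemma toCircle_measurable : Measurable (AddCircle.toCircle (T := TT)) :=
  AddCircle.continuous_toCircle.measurable

lemma toCircle_surjective : Function.Surjective (AddCircle.toCircle (T := TT)) := by
  intro g
  obtain ⟨x, hx⟩ := (AddCircle.homeomorphCircle (by positivity : TT ≠ 0)).surjective g
  exact ⟨x, by rwa [AddCircle.homeomorphCircle_apply] at hx⟩

instance : IsProbabilityMeasure mu0 :=
  Measure.isProbabilityMeasure_map toCircle_measurable.aemeasurable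

instance : mu0.IsMulLeftInvariant := by
  constructor
  intro g
  obtain ⟨a, rfl⟩ := toCircle_surjective g
  rw [mu0, Measure.map_map (measurable_const_mul _) toCircle_measurable]
  have hcomp : (fun x => AddCircle.toCircle a * x) ∘ AddCircle.toCircle (T := TT)
      = AddCircle.toCircle ∘ (fun x => a + x) := by
    ext x; simp [Function.comp, AddCircle.toCircle_add]
  rw [hcomp, ← Measure.map_map toCircle_measurable (measurable_const_add _),
    map_add_left_eq_self]

instance : mu0.IsOpenPosMeasure := by
  constructor
  intro U hU hne
  rw [mu0, Measure.map_apply toCircle_measurable hU.measurableSet]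
  refine (AddCircle.continuous_toCircle.isOpen_preimage U hU).measure_ne_zero _ ?_
  obtain ⟨u, hu⟩ := hne
  obtain ⟨x, rfl⟩ := toCircle_surjective u
  exact ⟨x, hu⟩

instance : mu0.IsHaarMeasure := { }

lemma m_eq (m : Measure Circle) [m.IsHaarMeasure] [IsProbabilityMeasure m] : m = mu0 :=
  Measure.isHaarMeasure_eq_of_isProbabilityMeasure m mu0

lemma exp_ne_one {θ : ℝ} (h0 : 0 < θ) (h1 : θ ≤ 1) : Complex.exp (θ * Complex.I) ≠ 1 := by
  intro h
  rw [Complex.exp_eq_one_iff] at h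
  obtain ⟨n, hn⟩ := h
  have : (θ : ℂ) = ((n * (2 * π) : ℝ) : ℂ) := by
    have : (θ : ℂ) * Complex.I = ((n * (2 * π) : ℝ) : ℂ) * Complex.I := by
      rw [hn]; push_cast; ring
    exact mul_right_cancel₀ Complex.I_ne_zero this
  have hθ : θ = n * (2 * π) := by exact_mod_cast this
  rcases le_or_gt n 0 with hn0 | hn0
  · nlinarith [Real.two_pi_pos, (by exact_mod_cast hn0 : (n:ℝ) ≤ 0)]
  · have : (1:ℝ) ≤ n := by exact_mod_cast hn0
    nlinarith [Real.two_pi_pos, Real.pi_gt_three]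

lemma norm_one_sub_exp_le {θ : ℝ} (h0 : 0 < θ) (h1 : θ ≤ 1) :
    ‖(1 : ℂ) - Complex.exp (θ * Complex.I)‖ ≤ 2 * θ := by
  rw [norm_sub_rev]
  have := Complex.norm_exp_sub_one_le (x := θ * Complex.I)
    (by simpa [abs_of_pos h0] using h1)
  calc ‖Complex.exp (θ * Complex.I) - 1‖ ≤ 2 * ‖(θ : ℂ) * Complex.I‖ := this
    _ = 2 * θ := by
        simp [abs_of_pos h0]

lemma key_lower {θ : ℝ} (h0 : 0 < θ) (h1 : θ ≤ 1) :
    (2 * θ)⁻¹ ≤ ‖((1 : ℂ) - Complex.exp (θ * Complex.I))⁻¹‖ := by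
  rw [norm_inv]
  have hne : (1 : ℂ) - Complex.exp (θ * Complex.I) ≠ 0 := by
    intro h
    exact exp_ne_one h0 h1 (by linear_combination -h)
  have hpos : 0 < ‖(1 : ℂ) - Complex.exp (θ * Complex.I)‖ := norm_pos_iff.2 hne
  exact inv_anti₀ hpos (norm_one_sub_exp_le h0 h1)

lemma g_meas (c : ℂ) : Measurable (fun u : Circle => ENNReal.ofReal ‖((1:ℂ) - c * u)⁻¹‖) := by
  have h1 : Continuous fun u : Circle => (1:ℂ) - c * u :=
    continuous_const.sub (continuous_const.mul continuous_subtype_val)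
  exact ((h1.measurable.inv).norm).ennreal_ofReal

noncomputable def gfun : AddCircle TT → ℝ≥0∞ :=
  fun x => ENNReal.ofReal ‖((1:ℂ) - (AddCircle.toCircle x : ℂ))⁻¹‖

lemma lint_one_sub_top :
    ∫⁻ u : Circle, ENNReal.ofReal ‖((1:ℂ) - (u:ℂ))⁻¹‖ ∂mu0 = ⊤ := by
  have hmeas : Measurable (fun u : Circle => ENNReal.ofReal ‖((1:ℂ) - (u:ℂ))⁻¹‖) := by
    simpa using g_meas 1
  rw [mu0, lintegral_map hmeas toCircle_measurable]
  have hgmeas : Measurable gfun := hmeas.comp toCircle_measurable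
  have hvol : ∫⁻ x, gfun x = ⊤ := by
    rw [← AddCircle.lintegral_preimage TT 0 gfun]
    refine top_unique ?_
    have hsub : Ioc (0:ℝ) 1 ⊆ Ioc 0 (0 + TT) := by
      apply Ioc_subset_Ioc le_rfl
      nlinarith [Real.pi_gt_three]
    refine le_trans ?_ (lintegral_mono_set hsub)
    have hpt : ∀ θ ∈ Ioc (0:ℝ) 1,
        ENNReal.ofReal ((2 * θ)⁻¹) ≤ gfun (θ : AddCircle TT) := by
      intro θ hθ
      have hc : (AddCircle.toCircle (θ : AddCircle TT) : ℂ) = Complex.exp (θ * Complex.I) := by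
        rw [AddCircle.toCircle_apply_mk]
        rw [show 2 * π / TT * θ = θ by field_simp]
        exact Circle.coe_exp θ
      unfold gfun
      rw [hc]
      exact ENNReal.ofReal_le_ofReal (key_lower hθ.1 hθ.2)
    calc (⊤ : ℝ≥0∞) = ∫⁻ θ in Ioc (0:ℝ) 1, ENNReal.ofReal ((2 * θ)⁻¹) := by
          have h2 : ∀ θ : ℝ, ENNReal.ofReal ((2 * θ)⁻¹)
              = ENNReal.ofReal (2⁻¹ : ℝ) * ENNReal.ofReal θ⁻¹ := by
            intro θ
            rw [mul_inv, ENNReal.ofReal_mul (by norm_num)]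
          simp_rw [h2]
          rw [lintegral_const_mul' _ _ ENNReal.ofReal_ne_top, aux_inv_lintegral,
            ENNReal.mul_top (by simp)]
      _ ≤ ∫⁻ θ in Ioc (0:ℝ) 1, gfun (θ : AddCircle TT) := by
          refine setLIntegral_mono (hgmeas.comp ?_) hpt
          exact AddCircle.measurable_mk'
  have hsmul := AddCircle.volume_eq_smul_haarAddCircle (T := TT)
  have hvol2 : ∫⁻ x, gfun x ∂(volume) = ⊤ := hvol
  rw [hsmul, lintegral_smul_measure] at hvol2
  have : ∫⁻ x, gfun x ∂(AddCircle.haarAddCircle) = ⊤ := by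
    rcases ENNReal.mul_eq_top.mp hvol2 with ⟨_, h⟩ | ⟨h, _⟩
    · exact h
    · exact absurd h ENNReal.ofReal_ne_top
  exact this

lemma inner_iota (w z : Circle) : ⟪iota2 w, iota2 z⟫ = conj (w:ℂ) * z := by
  simp [iota2, PiLp.inner_apply, Fin.sum_univ_two, RCLike.inner_apply]
  ring

lemma iota2_cont : Continuous iota2 := by
  unfold iota2
  refine (EuclideanSpace.equiv (Fin 2) ℂ).symm.continuous.comp (continuous_pi fun i => ?_)
  fin_cases i
  · exact continuous_subtype_val
  · exact continuous_const

lemma iota2_inj : Function.Injective iota2 := by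
  intro a b h
  exact Circle.ext (by simpa [iota2] using congrArg (fun f : EuclideanSpace ℂ (Fin 2) => f 0) h)

end Aux

/-- Let `μ` be one-dimensional normalized Lebesgue measure on the circle
`C = {(z,0) : |z| = 1} ⊆ ∂𝔹₂`, i.e. the pushforward of normalized Haar measure on `∂𝔻`
under `z ↦ (z,0)`. Then `sup_{0≤r<1} ∫∫ |1/(1 − r²⟨z,w⟩)| dμ(w) dμ(z) = ∞`: `μ` has
infinite energy with respect to the modulus of the Drury–Arveson kernel. -/
theorem stmt7 (m : Measure Circle) [m.IsHaarMeasure] [IsProbabilityMeasure m] :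
    (⨆ r : {r : ℝ // 0 ≤ r ∧ r < 1},
        ENNReal.ofReal (∫ z, ∫ w, ‖((1 : ℂ) - ((r : ℝ) : ℂ) ^ 2 * ⟪w, z⟫)⁻¹‖
          ∂(m.map iota2) ∂(m.map iota2))) = ⊤ := by
  have hemb : MeasurableEmbedding iota2 :=
    (iota2_cont.isClosedEmbedding iota2_inj).measurableEmbedding
  -- Step 1 : reduce the double integral to a single rotation-invariant integral
  have hIJ : ∀ c : ℂ,
      (∫ z, ∫ w, ‖((1:ℂ) - c * ⟪w, z⟫)⁻¹‖ ∂(m.map iota2) ∂(m.map iota2))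
        = ∫ u : Circle, ‖((1:ℂ) - c * u)⁻¹‖ ∂m := by
    intro c
    rw [hemb.integral_map]
    have hinner : ∀ z : Circle,
        (∫ w, ‖((1:ℂ) - c * ⟪w, iota2 z⟫)⁻¹‖ ∂(m.map iota2))
          = ∫ u : Circle, ‖((1:ℂ) - c * u)⁻¹‖ ∂m := by
      intro z
      rw [hemb.integral_map]
      have hdiv : ∀ w : Circle, ⟪iota2 w, iota2 z⟫ = ((z / w : Circle) : ℂ) := by
        intro w
        rw [inner_iota, div_eq_mul_inv, Circle.coe_mul, Circle.coe_inv_eq_conj]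
        ring
      simp_rw [hdiv]
      exact (Measure.measurePreserving_div_left m z).integral_comp
        (MeasurableEquiv.divLeft z).measurableEmbedding
        (fun u : Circle => ‖((1:ℂ) - c * u)⁻¹‖)
    simp_rw [hinner]
    simp
  -- Step 2 : integrability, so that Bochner integral matches the lower integral
  have hJF : ∀ c : ℂ, ‖c‖ < 1 →
      ENNReal.ofReal (∫ u : Circle, ‖((1:ℂ) - c * u)⁻¹‖ ∂m)
        = ∫⁻ u : Circle, ENNReal.ofReal ‖((1:ℂ) - c * u)⁻¹‖ ∂m := by
    intro c hc
    refine ofReal_integral_eq_lintegral_ofReal ?_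
      (Filter.Eventually.of_forall fun u => norm_nonneg _)
    have hcont : Continuous fun u : Circle => ‖((1:ℂ) - c * u)⁻¹‖ := by
      refine ((continuous_const.sub (continuous_const.mul continuous_subtype_val)).inv₀ ?_).norm
      intro u h
      have h1 : c * (u : ℂ) = 1 := by
        have h' : (1:ℂ) - c * u = 0 := h
        linear_combination -h'
      have : ‖c‖ = 1 := by
        have := congrArg norm h1
        rwa [norm_mul, mem_sphere_zero_iff_norm.1 u.2, mul_one, norm_one] at this
      exact absurd this (ne_of_lt hc)
    exact hcont.integrable_of_hasCompactSupport ((isClosed_tsupport _).isCompact)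
  -- Step 3 : Fatou along a sequence rₙ → 1
  set rn : ℕ → ℝ := fun n => 1 - 1/(n+2) with hrn
  have hrn01 : ∀ n : ℕ, 0 ≤ rn n ∧ rn n < 1 := by
    intro n
    constructor
    · have h2 : (1:ℝ) ≤ (n:ℝ) + 2 := by
        have := Nat.cast_nonneg (α := ℝ) n
        linarith
      have : 1/((n:ℝ)+2) ≤ 1 := by
        rw [div_le_one (by positivity)]; exact h2
      simp only [hrn]; linarith
    · have : 0 < 1/((n:ℝ)+2) := by positivity
      simp only [hrn]; linarith
  have habs : ∀ n : ℕ, ‖(((rn n : ℝ)) : ℂ)^2‖ < 1 := by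
    intro n
    rw [norm_pow, Complex.norm_real, Real.norm_of_nonneg (hrn01 n).1]
    nlinarith [(hrn01 n).1, (hrn01 n).2]
  have htend : Filter.Tendsto (fun n : ℕ => (((rn n : ℝ)) : ℂ)^2) Filter.atTop (nhds 1) := by
    have h0 : Filter.Tendsto rn Filter.atTop (nhds 1) := by
      have : Filter.Tendsto (fun n : ℕ => 1/((n:ℝ)+2)) Filter.atTop (nhds 0) := by
        have h' : (fun n : ℕ => 1/((n:ℝ)+2))
            = (fun n : ℕ => 1/((n:ℝ)+1)) ∘ (fun n : ℕ => n + 1) := by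
          funext n
          simp only [Function.comp]
          push_cast
          ring_nf
        rw [h']
        exact tendsto_one_div_add_atTop_nhds_zero_nat.comp (Filter.tendsto_add_atTop_nat 1)
      simpa [hrn] using tendsto_const_nhds.sub this
    have h1 : Filter.Tendsto (fun n : ℕ => ((rn n : ℝ) : ℂ)) Filter.atTop (nhds 1) := by
      have := (Complex.continuous_ofReal.tendsto 1).comp h0
      simpa [Function.comp_def] using this
    have := h1.pow 2
    simpa using this
  have hlim : ∀ u : Circle, ENNReal.ofReal ‖((1:ℂ) - (u:ℂ))⁻¹‖ ≤
      Filter.liminf (fun n : ℕ =>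
        ENNReal.ofReal ‖((1:ℂ) - ((rn n : ℝ) : ℂ)^2 * u)⁻¹‖) Filter.atTop := by
    intro u
    by_cases hu : (u : ℂ) = 1
    · simp [hu]
    · have h1 : (1:ℂ) - u ≠ 0 := sub_ne_zero.mpr (Ne.symm hu)
      have htt : Filter.Tendsto (fun n : ℕ =>
          ENNReal.ofReal ‖((1:ℂ) - ((rn n : ℝ) : ℂ)^2 * u)⁻¹‖) Filter.atTop
          (nhds (ENNReal.ofReal ‖((1:ℂ) - (u:ℂ))⁻¹‖)) := by
        apply ENNReal.tendsto_ofReal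
        apply Filter.Tendsto.norm
        apply Filter.Tendsto.inv₀ _ h1
        simpa using tendsto_const_nhds.sub (htend.mul tendsto_const_nhds)
      exact htt.liminf_eq.ge
  -- Step 4 : put everything together
  refine top_unique ?_
  calc (⊤ : ℝ≥0∞) = ∫⁻ u : Circle, ENNReal.ofReal ‖((1:ℂ) - (u:ℂ))⁻¹‖ ∂m := by
        rw [m_eq m, lint_one_sub_top]
    _ ≤ ∫⁻ u : Circle, Filter.liminf (fun n : ℕ =>
          ENNReal.ofReal ‖((1:ℂ) - ((rn n : ℝ) : ℂ)^2 * u)⁻¹‖) Filter.atTop ∂m :=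
        lintegral_mono hlim
    _ ≤ Filter.liminf (fun n : ℕ => ∫⁻ u : Circle,
          ENNReal.ofReal ‖((1:ℂ) - ((rn n : ℝ) : ℂ)^2 * u)⁻¹‖ ∂m) Filter.atTop :=
        lintegral_liminf_le fun n => g_meas _
    _ ≤ ⨆ n : ℕ, ∫⁻ u : Circle,
          ENNReal.ofReal ‖((1:ℂ) - ((rn n : ℝ) : ℂ)^2 * u)⁻¹‖ ∂m :=
        by exact le_trans Filter.liminf_le_limsup Filter.limsup_le_iSup
    _ ≤ ⨆ r : {r : ℝ // 0 ≤ r ∧ r < 1},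
        ENNReal.ofReal (∫ z, ∫ w, ‖((1 : ℂ) - ((r : ℝ) : ℂ) ^ 2 * ⟪w, z⟫)⁻¹‖
          ∂(m.map iota2) ∂(m.map iota2)) := by
        refine iSup_le fun n => le_iSup_of_le ⟨rn n, hrn01 n⟩ ?_
        rw [hIJ, hJF _ (habs n)]
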